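/- Let Π be a partition of ℕ. Then Comm_{𝔖_ℕ}(𝔖_Π) = 𝔖_Π if and only if Π has at most one finite block. -/

import Mathlib

/-- The finitary symmetric group `𝔖_A` of a set (type) `A`: the subgroup of `Equiv.Perm A`
consisting of bijections moving only finitely many points. -/
def finitaryPerms (α : Type*) : Subgroup (Equiv.Perm α) where
  carrier := {σ | {x | σ x ≠ x}.Finite}
  one_mem' := by simp
  mul_mem' := by
    intro a b ha hb
    refine Set.Finite.subset (ha.union hb) ?_
    intro x hx
    by_contra hmem
    simp only [Set.mem_union, Set.mem_setOf_eq, not_or, not_not] at hmem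
    exact hx (by simp [Equiv.Perm.mul_apply, hmem.2, hmem.1])
  inv_mem' := by
    intro a ha
    refine Set.Finite.subset (ha.image a) ?_
    intro x hx
    refine ⟨a⁻¹ x, ?_, Equiv.apply_symm_apply a x⟩
    simp only [Set.mem_setOf_eq, Equiv.Perm.inv_def, Equiv.apply_symm_apply]
    exact fun h => hx h.symm


/-- The Young subgroup `𝔖_Π` associated to a partition `Π` of `ℕ`, as a subgroup of the
infinite symmetric group `𝔖_ℕ` of finitary permutations: all finitary permutations mapping
every block of `Π` onto itself. -/
def youngSubgroup (P : Set (Set ℕ)) : Subgroup (finitaryPerms ℕ) where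
  carrier := {σ | ∀ A ∈ P, (σ : Equiv.Perm ℕ) '' A = A}
  one_mem' := by intro A _; simp
  mul_mem' := by
    intro a b ha hb A hA
    have hcomp : ⇑((a : Equiv.Perm ℕ) * (b : Equiv.Perm ℕ)) =
        ⇑(a : Equiv.Perm ℕ) ∘ ⇑(b : Equiv.Perm ℕ) := rfl
    show ⇑(((a * b : finitaryPerms ℕ)) : Equiv.Perm ℕ) '' A = A
    rw [Subgroup.coe_mul, hcomp, Set.image_comp, hb A hA, ha A hA]
  inv_mem' := by
    intro a ha A hA
    show ⇑((a⁻¹ : finitaryPerms ℕ) : Equiv.Perm ℕ) '' A = A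
    rw [Subgroup.coe_inv]
    have := congrArg (Set.image ⇑(a : Equiv.Perm ℕ)⁻¹) (ha A hA)
    rw [← Set.image_comp,
      (by funext x; simp : ⇑(a : Equiv.Perm ℕ)⁻¹ ∘ ⇑(a : Equiv.Perm ℕ) = id), Set.image_id] at this
    exact this.symm

open Pointwise

abbrev FP := finitaryPerms ℕ

lemma young_mem_iff {P : Set (Set ℕ)} {σ : FP} :
    σ ∈ youngSubgroup P ↔ ∀ A ∈ P, ⇑(σ : Equiv.Perm ℕ) '' A = A := Iff.rfl

lemma block_unique {P : Set (Set ℕ)} (hP : Setoid.IsPartition P) {A B : Set ℕ}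
    (hA : A ∈ P) (hB : B ∈ P) {x : ℕ} (hxA : x ∈ A) (hxB : x ∈ B) : A = B := by
  obtain ⟨C, _, hC⟩ := hP.2 x
  rw [hC A ⟨hA, hxA⟩, hC B ⟨hB, hxB⟩]

lemma apply_mem_of_young {P : Set (Set ℕ)} {σ : FP} (hσ : σ ∈ youngSubgroup P)
    {A : Set ℕ} (hA : A ∈ P) {x : ℕ} (hx : x ∈ A) : (σ : Equiv.Perm ℕ) x ∈ A := by
  rw [← young_mem_iff.mp hσ A hA]
  exact ⟨x, hx, rfl⟩

lemma young_of_pointwise {P : Set (Set ℕ)} (hP : Setoid.IsPartition P) {σ : FP}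
    (h : ∀ A ∈ P, ∀ x ∈ A, (σ : Equiv.Perm ℕ) x ∈ A) : σ ∈ youngSubgroup P := by
  rw [young_mem_iff]
  intro A hA
  apply Set.Subset.antisymm
  · rintro _ ⟨x, hx, rfl⟩; exact h A hA x hx
  · intro y hy
    obtain ⟨C, ⟨hC1, hmem⟩, _⟩ := hP.2 ((σ : Equiv.Perm ℕ)⁻¹ y)
    have h2 : (σ : Equiv.Perm ℕ) ((σ : Equiv.Perm ℕ)⁻¹ y) ∈ C := h C hC1 _ hmem
    rw [Equiv.Perm.inv_def, Equiv.apply_symm_apply] at h2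
    have hAC := block_unique hP hA hC1 hy h2
    exact ⟨_, hAC ▸ hmem, Equiv.apply_symm_apply _ _⟩

def swapFP (a b : ℕ) : FP :=
  ⟨Equiv.swap a b, Set.Finite.subset ((Set.finite_singleton b).insert a) (by
    intro x hx
    by_contra hne
    simp only [Set.mem_insert_iff, Set.mem_singleton_iff, not_or] at hne
    exact hx (Equiv.swap_apply_of_ne_of_ne hne.1 hne.2))⟩

@[simp] lemma swapFP_coe (a b : ℕ) : ((swapFP a b : FP) : Equiv.Perm ℕ) = Equiv.swap a b := rfl

@[simp] lemma swapFP_inv (a b : ℕ) : (swapFP a b)⁻¹ = swapFP a b := by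
  ext x; simp [swapFP]

@[simp] lemma swapFP_mul_self (a b : ℕ) : swapFP a b * swapFP a b = 1 := by
  ext x; simp [swapFP]

lemma swapFP_mem_young {P : Set (Set ℕ)} (hP : Setoid.IsPartition P) {A : Set ℕ} (hA : A ∈ P)
    {a b : ℕ} (ha : a ∈ A) (hb : b ∈ A) : swapFP a b ∈ youngSubgroup P := by
  apply young_of_pointwise hP
  intro C hC x hx
  rcases eq_or_ne x a with rfl | hxa
  · have := block_unique hP hC hA hx ha
    subst this
    simpa using hb
  rcases eq_or_ne x b with rfl | hxb
  · have := block_unique hP hC hA hx hb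
    subst this
    simpa using ha
  · simpa [Equiv.swap_apply_of_ne_of_ne hxa hxb] using hx

lemma mem_conj_smul {H : Subgroup FP} {g x : FP} :
    x ∈ ConjAct.toConjAct g • H ↔ g⁻¹ * x * g ∈ H := by
  rw [Subgroup.mem_pointwise_smul_iff_inv_smul_mem, ← ConjAct.toConjAct_inv,
    ConjAct.toConjAct_smul, inv_inv]

lemma conj_swap_mem {P : Set (Set ℕ)} (hP : Setoid.IsPartition P) {ρ : FP}
    (hρ : ρ ∈ youngSubgroup P) {a b : ℕ} (hfa : (ρ : Equiv.Perm ℕ) a = a)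
    (hfb : (ρ : Equiv.Perm ℕ) b = b) :
    swapFP a b * ρ * swapFP a b ∈ youngSubgroup P := by
  apply young_of_pointwise hP
  intro C hC x hx
  have hval : ((swapFP a b * ρ * swapFP a b : FP) : Equiv.Perm ℕ) x
      = Equiv.swap a b ((ρ : Equiv.Perm ℕ) (Equiv.swap a b x)) := rfl
  rw [hval]
  rcases eq_or_ne x a with rfl | hxa
  · rw [Equiv.swap_apply_left, hfb, Equiv.swap_apply_right]; exact hx
  rcases eq_or_ne x b with rfl | hxb
  · rw [Equiv.swap_apply_right, hfa, Equiv.swap_apply_left]; exact hx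
  · rw [Equiv.swap_apply_of_ne_of_ne hxa hxb]
    have hρx := apply_mem_of_young hρ hC hx
    have h1 : (ρ : Equiv.Perm ℕ) x ≠ a := fun h => hxa ((ρ : Equiv.Perm ℕ).injective (h.trans hfa.symm))
    have h2 : (ρ : Equiv.Perm ℕ) x ≠ b := fun h => hxb ((ρ : Equiv.Perm ℕ).injective (h.trans hfb.symm))
    rw [Equiv.swap_apply_of_ne_of_ne h1 h2]; exact hρx

lemma relIndex_ne_zero_of_agree {K H : Subgroup FP} {S T : Set ℕ} (hS : S.Finite) (hT : T.Finite)
    (hmap : ∀ σ : FP, σ ∈ H → ∀ s ∈ S, (σ : Equiv.Perm ℕ) s ∈ T)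
    (hker : ∀ σ τ : FP, σ ∈ H → τ ∈ H →
      (∀ s ∈ S, (σ : Equiv.Perm ℕ) s = (τ : Equiv.Perm ℕ) s) → τ⁻¹ * σ ∈ K) :
    K.relIndex H ≠ 0 := by
  haveI := hS.to_subtype
  haveI := hT.to_subtype
  rw [Subgroup.relIndex, Subgroup.index, Nat.card_ne_zero]
  refine ⟨⟨QuotientGroup.mk 1⟩, ?_⟩
  have key : ∀ q : H ⧸ K.subgroupOf H, ∀ s : S, (((q.out : H) : FP) : Equiv.Perm ℕ) s ∈ T :=
    fun q s => hmap _ q.out.2 s s.2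
  apply Finite.of_injective (fun q : H ⧸ K.subgroupOf H => fun s : S => (⟨_, key q s⟩ : T))
  intro q1 q2 hq
  have hagree : ∀ s ∈ S, (((q1.out : H) : FP) : Equiv.Perm ℕ) s
      = (((q2.out : H) : FP) : Equiv.Perm ℕ) s := by
    intro s hs
    have := congrFun hq ⟨s, hs⟩
    exact congrArg Subtype.val this
  have hK := hker _ _ q1.out.2 q2.out.2 hagree
  have : q2.out⁻¹ * q1.out ∈ K.subgroupOf H := by
    rw [Subgroup.mem_subgroupOf]; exact_mod_cast hK
  symm
  calc q2 = QuotientGroup.mk q2.out := (QuotientGroup.out_eq' q2).symm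
    _ = QuotientGroup.mk q1.out := by rw [QuotientGroup.eq]; exact this
    _ = q1 := QuotientGroup.out_eq' q1

lemma inf_block_claim {P : Set (Set ℕ)} (hP : Setoid.IsPartition P) {g : FP}
    (hg : g ∈ Subgroup.Commensurable.commensurator (youngSubgroup P))
    {A : Set ℕ} (hA : A ∈ P) (hAinf : A.Infinite) {x : ℕ} (hx : x ∈ A) :
    (g : Equiv.Perm ℕ) x ∈ A := by
  by_contra hgx
  set H := youngSubgroup P with hH
  obtain ⟨B, ⟨hB, hgxB⟩, _⟩ := hP.2 ((g : Equiv.Perm ℕ) x)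
  have relfin : H.relIndex (ConjAct.toConjAct g • H) ≠ 0 :=
    ((Subgroup.Commensurable.commensurator_mem_iff H g).mp hg).2
  haveI : Finite ((ConjAct.toConjAct g • H : Subgroup FP)
      ⧸ H.subgroupOf (ConjAct.toConjAct g • H)) :=
    Nat.finite_of_card_ne_zero relfin
  have hsupp : {y | (g : Equiv.Perm ℕ) y ≠ y}.Finite := g.2
  set Z := A \ ({y | (g : Equiv.Perm ℕ) y ≠ y} ∪ {x}) with hZdef
  have hZinf : Z.Infinite := hAinf.diff (hsupp.union (Set.finite_singleton x))
  have hmemZ : ∀ z ∈ Z, z ∈ A ∧ (g : Equiv.Perm ℕ) z = z ∧ z ≠ x := by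
    intro z hz
    refine ⟨hz.1, ?_, ?_⟩
    · by_contra h; exact hz.2 (Or.inl h)
    · intro h; exact hz.2 (Or.inr h)
  have smem : ∀ z ∈ Z, g * swapFP x z * g⁻¹ ∈ ConjAct.toConjAct g • H := by
    intro z hz
    rw [mem_conj_smul]
    have heq : g⁻¹ * (g * swapFP x z * g⁻¹) * g = swapFP x z := by group
    rw [heq]
    exact swapFP_mem_young hP hA hx (hmemZ z hz).1
  let f : Z → ((ConjAct.toConjAct g • H : Subgroup FP)
      ⧸ H.subgroupOf (ConjAct.toConjAct g • H)) :=
    fun z => QuotientGroup.mk ⟨g * swapFP x (z : ℕ) * g⁻¹, smem z z.2⟩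
  have hinj : Function.Injective f := by
    intro z w hzw
    obtain ⟨hzA, hgz, hzx⟩ := hmemZ z z.2
    obtain ⟨hwA, hgw, hwx⟩ := hmemZ w w.2
    by_contra hne
    have hne' : (z : ℕ) ≠ (w : ℕ) := fun h => hne (Subtype.ext h)
    rw [QuotientGroup.eq, Subgroup.mem_subgroupOf] at hzw
    have hρmem : (g * swapFP x (z : ℕ) * g⁻¹)⁻¹ * (g * swapFP x (w : ℕ) * g⁻¹) ∈ H := hzw
    set ρ := (g * swapFP x (z : ℕ) * g⁻¹)⁻¹ * (g * swapFP x (w : ℕ) * g⁻¹) with hρdef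
    have hρeq : ρ = g * (swapFP x (z : ℕ) * swapFP x (w : ℕ)) * g⁻¹ := by
      rw [hρdef, mul_inv_rev, mul_inv_rev, inv_inv, swapFP_inv]
      group
    have hval : (ρ : Equiv.Perm ℕ) ((g : Equiv.Perm ℕ) x) = (w : ℕ) := by
      rw [hρeq]
      have : ((g * (swapFP x (z : ℕ) * swapFP x (w : ℕ)) * g⁻¹ : FP) : Equiv.Perm ℕ)
          ((g : Equiv.Perm ℕ) x)
          = (g : Equiv.Perm ℕ) (Equiv.swap x (z : ℕ) (Equiv.swap x (w : ℕ)
            ((g : Equiv.Perm ℕ)⁻¹ ((g : Equiv.Perm ℕ) x)))) := rfl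
      rw [this, Equiv.Perm.inv_def, Equiv.symm_apply_apply, Equiv.swap_apply_left,
        Equiv.swap_apply_of_ne_of_ne hwx hne'.symm, hgw]
    have hwB : (w : ℕ) ∈ B := hval ▸ apply_mem_of_young hρmem hB hgxB
    have hAB := block_unique hP hA hB hwA hwB
    exact hgx (hAB ▸ hgxB)
  haveI : Finite Z := Finite.of_injective f hinj
  exact hZinf (Set.toFinite Z)

/-- `Comm_{𝔖_ℕ}(𝔖_Π) = 𝔖_Π` if and only if the partition `Π` has at most one finite block. -/
theorem commensurator_eq_youngSubgroup_iff (P : Set (Set ℕ)) (hP : Setoid.IsPartition P) :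
    Subgroup.Commensurable.commensurator (youngSubgroup P) = youngSubgroup P ↔
      {A ∈ P | A.Finite}.Subsingleton := by
  set H := youngSubgroup P with hH
  constructor
  · intro hcomm A hA' B hB'
    obtain ⟨hA, hAfin⟩ := hA'
    obtain ⟨hB, hBfin⟩ := hB'
    obtain ⟨a, ha⟩ := Set.nonempty_iff_ne_empty.mpr (fun h => hP.1 (h ▸ hA))
    obtain ⟨b, hb⟩ := Set.nonempty_iff_ne_empty.mpr (fun h => hP.1 (h ▸ hB))
    have hmem : swapFP a b ∈ Subgroup.Commensurable.commensurator H := by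
      rw [Subgroup.Commensurable.commensurator_mem_iff]
      constructor
      · refine relIndex_ne_zero_of_agree (S := {a, b}) (T := A ∪ B)
          ((Set.finite_singleton b).insert a) (hAfin.union hBfin) ?_ ?_
        · intro σ hσ s hs
          rcases hs with rfl | hs
          · exact Or.inl (apply_mem_of_young hσ hA ha)
          · rw [Set.mem_singleton_iff] at hs
            subst hs
            exact Or.inr (apply_mem_of_young hσ hB hb)
        · intro σ τ hσ hτ hagree
          have hρ : τ⁻¹ * σ ∈ H := mul_mem (inv_mem hτ) hσ
          have hfixa : ((τ⁻¹ * σ : FP) : Equiv.Perm ℕ) a = a := by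
            have : ((τ⁻¹ * σ : FP) : Equiv.Perm ℕ) a
                = (τ : Equiv.Perm ℕ)⁻¹ ((σ : Equiv.Perm ℕ) a) := rfl
            rw [this, hagree a (Or.inl rfl), Equiv.Perm.inv_def, Equiv.symm_apply_apply]
          have hfixb : ((τ⁻¹ * σ : FP) : Equiv.Perm ℕ) b = b := by
            have : ((τ⁻¹ * σ : FP) : Equiv.Perm ℕ) b
                = (τ : Equiv.Perm ℕ)⁻¹ ((σ : Equiv.Perm ℕ) b) := rfl
            rw [this, hagree b (Or.inr rfl), Equiv.Perm.inv_def, Equiv.symm_apply_apply]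
          rw [mem_conj_smul, swapFP_inv]
          exact conj_swap_mem hP hρ hfixa hfixb
      · refine relIndex_ne_zero_of_agree (S := {a, b}) (T := A ∪ B)
          ((Set.finite_singleton b).insert a) (hAfin.union hBfin) ?_ ?_
        · intro σ hσ s hs
          have hh : swapFP a b * σ * swapFP a b ∈ H := by
            have := mem_conj_smul.mp hσ
            rwa [swapFP_inv] at this
          have hσval : ∀ t : ℕ, (σ : Equiv.Perm ℕ) t
              = Equiv.swap a b (((swapFP a b * σ * swapFP a b : FP) : Equiv.Perm ℕ)
                (Equiv.swap a b t)) := by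
            intro t
            have : Equiv.swap a b (((swapFP a b * σ * swapFP a b : FP) : Equiv.Perm ℕ)
                (Equiv.swap a b t))
                = Equiv.swap a b (Equiv.swap a b ((σ : Equiv.Perm ℕ)
                  (Equiv.swap a b (Equiv.swap a b t)))) := rfl
            rw [this, Equiv.swap_apply_self, Equiv.swap_apply_self]
          rcases hs with rfl | hs
          · rw [hσval s, Equiv.swap_apply_left]
            have hhb : ((swapFP s b * σ * swapFP s b : FP) : Equiv.Perm ℕ) b ∈ B :=
              apply_mem_of_young hh hB hb
            rcases eq_or_ne (((swapFP s b * σ * swapFP s b : FP) : Equiv.Perm ℕ) b) s with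
              heq | hne1
            · rw [heq, Equiv.swap_apply_left]; exact Or.inr hb
            rcases eq_or_ne (((swapFP s b * σ * swapFP s b : FP) : Equiv.Perm ℕ) b) b with
              heq | hne2
            · rw [heq, Equiv.swap_apply_right]; exact Or.inl ha
            · rw [Equiv.swap_apply_of_ne_of_ne hne1 hne2]; exact Or.inr hhb
          · rw [Set.mem_singleton_iff] at hs
            subst hs
            rw [hσval s, Equiv.swap_apply_right]
            have hha : ((swapFP a s * σ * swapFP a s : FP) : Equiv.Perm ℕ) a ∈ A :=
              apply_mem_of_young hh hA ha
            rcases eq_or_ne (((swapFP a s * σ * swapFP a s : FP) : Equiv.Perm ℕ) a) a with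
              heq | hne1
            · rw [heq, Equiv.swap_apply_left]; exact Or.inr hb
            rcases eq_or_ne (((swapFP a s * σ * swapFP a s : FP) : Equiv.Perm ℕ) a) s with
              heq | hne2
            · rw [heq, Equiv.swap_apply_right]; exact Or.inl ha
            · rw [Equiv.swap_apply_of_ne_of_ne hne1 hne2]; exact Or.inl hha
        · intro σ τ hσ hτ hagree
          have hρ : τ⁻¹ * σ ∈ ConjAct.toConjAct (swapFP a b) • H :=
            mul_mem (inv_mem hτ) hσ
          have hh : swapFP a b * (τ⁻¹ * σ) * swapFP a b ∈ H := by
            have := mem_conj_smul.mp hρ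
            rwa [swapFP_inv] at this
          have hfixa : ((τ⁻¹ * σ : FP) : Equiv.Perm ℕ) a = a := by
            have : ((τ⁻¹ * σ : FP) : Equiv.Perm ℕ) a
                = (τ : Equiv.Perm ℕ)⁻¹ ((σ : Equiv.Perm ℕ) a) := rfl
            rw [this, hagree a (Or.inl rfl), Equiv.Perm.inv_def, Equiv.symm_apply_apply]
          have hfixb : ((τ⁻¹ * σ : FP) : Equiv.Perm ℕ) b = b := by
            have : ((τ⁻¹ * σ : FP) : Equiv.Perm ℕ) b
                = (τ : Equiv.Perm ℕ)⁻¹ ((σ : Equiv.Perm ℕ) b) := rfl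
            rw [this, hagree b (Or.inr rfl), Equiv.Perm.inv_def, Equiv.symm_apply_apply]
          have hhfixa : ((swapFP a b * (τ⁻¹ * σ) * swapFP a b : FP) : Equiv.Perm ℕ) a = a := by
            have : ((swapFP a b * (τ⁻¹ * σ) * swapFP a b : FP) : Equiv.Perm ℕ) a
                = Equiv.swap a b (((τ⁻¹ * σ : FP) : Equiv.Perm ℕ) (Equiv.swap a b a)) := rfl
            rw [this, Equiv.swap_apply_left, hfixb, Equiv.swap_apply_right]
          have hhfixb : ((swapFP a b * (τ⁻¹ * σ) * swapFP a b : FP) : Equiv.Perm ℕ) b = b := by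
            have : ((swapFP a b * (τ⁻¹ * σ) * swapFP a b : FP) : Equiv.Perm ℕ) b
                = Equiv.swap a b (((τ⁻¹ * σ : FP) : Equiv.Perm ℕ) (Equiv.swap a b b)) := rfl
            rw [this, Equiv.swap_apply_right, hfixa, Equiv.swap_apply_left]
          have := conj_swap_mem hP hh hhfixa hhfixb
          have heq : swapFP a b * (swapFP a b * (τ⁻¹ * σ) * swapFP a b) * swapFP a b
              = τ⁻¹ * σ := by
            have h2 := swapFP_mul_self a b
            calc swapFP a b * (swapFP a b * (τ⁻¹ * σ) * swapFP a b) * swapFP a b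
                = (swapFP a b * swapFP a b) * (τ⁻¹ * σ) * (swapFP a b * swapFP a b) := by group
              _ = τ⁻¹ * σ := by rw [h2]; group
          rwa [heq] at this
    rw [hcomm] at hmem
    have hbA : b ∈ A := by
      have := apply_mem_of_young hmem hA ha
      rwa [swapFP_coe, Equiv.swap_apply_left] at this
    exact block_unique hP hA hB hbA hb
  · intro hsub
    apply le_antisymm
    · intro g hg
      apply young_of_pointwise hP
      intro A hA x hx
      rcases Set.finite_or_infinite A with hAfin | hAinf
      · obtain ⟨C, ⟨hC, hgxC⟩, _⟩ := hP.2 ((g : Equiv.Perm ℕ) x)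
        rcases Set.finite_or_infinite C with hCfin | hCinf
        · have hCA : C = A := hsub ⟨hC, hCfin⟩ ⟨hA, hAfin⟩
          exact hCA ▸ hgxC
        · have hginv : g⁻¹ ∈ Subgroup.Commensurable.commensurator H := inv_mem hg
          have hxC' := inf_block_claim hP hginv hC hCinf hgxC
          have hxC : x ∈ C := by
            have : ((g⁻¹ : FP) : Equiv.Perm ℕ) ((g : Equiv.Perm ℕ) x) = x := by
              simp
            rwa [this] at hxC'
          have hAC := block_unique hP hA hC hx hxC
          exact absurd (hAC ▸ hAfin) hCinf
      · exact inf_block_claim hP hg hA hAinf hx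
    · intro h hh
      rw [Subgroup.Commensurable.commensurator_mem_iff]
      have hsmul : ConjAct.toConjAct h • H = H := by
        ext x
        rw [mem_conj_smul]
        constructor
        · intro hx
          have hmul := mul_mem (mul_mem hh hx) (inv_mem hh)
          have heq : h * (h⁻¹ * x * h) * h⁻¹ = x := by group
          rwa [heq] at hmul
        · intro hx
          exact mul_mem (mul_mem (inv_mem hh) hx) hh
      rw [hsmul]
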